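/- A finite freezing sandpile configuration stabilizes in at most nm+1 steps: if c is a finite simple configuration supported on an n×m rectangle (all cells outside frozen, values in {0,1,2,3,4} inside), then F^{nm+1}(c) is stable, i.e., F^{nm+1}(c) v < 4 or frozen for every cell v, and F^{nm+2}(c) = F^{nm+1}(c). -/

import Mathlib

def neighbors (v : ℤ × ℤ) : List (ℤ × ℤ) :=
  [(v.1, v.2 + 1), (v.1 + 1, v.2), (v.1, v.2 - 1), (v.1 - 1, v.2)]

def firedB (c : (ℤ × ℤ) → Option ℕ) (u : ℤ × ℤ) : Bool :=
  (c u).any (fun m => decide (4 ≤ m))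

def F (c : (ℤ × ℤ) → Option ℕ) : (ℤ × ℤ) → Option ℕ := fun v =>
  match c v with
  | none => none
  | some k => if 4 ≤ k then none else some (k + (neighbors v).countP (firedB c))

noncomputable def rect (n m : ℕ) : Finset (ℤ × ℤ) :=
  (Finset.Ico (0:ℤ) n) ×ˢ (Finset.Ico (0:ℤ) m)

noncomputable def live (n m : ℕ) (c : (ℤ × ℤ) → Option ℕ) : Finset (ℤ × ℤ) :=
  (rect n m).filter (fun v => (c v).isSome)

def Stable (c : (ℤ × ℤ) → Option ℕ) : Prop := ∀ v k, c v = some k → k < 4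

def Out (n m : ℕ) (c : (ℤ × ℤ) → Option ℕ) : Prop :=
  ∀ v, v ∉ rect n m → c v = none

lemma F_none {c : (ℤ × ℤ) → Option ℕ} {v : ℤ × ℤ} (h : c v = none) : F c v = none := by
  simp [F, h]

lemma Out_F {n m : ℕ} {c : (ℤ × ℤ) → Option ℕ} (h : Out n m c) : Out n m (F c) :=
  fun v hv => F_none (h v hv)

lemma fired_false {c : (ℤ × ℤ) → Option ℕ} (h : Stable c) (u : ℤ × ℤ) :
    firedB c u = false := by
  unfold firedB
  cases hc : c u with
  | none => simp
  | some k => simp [Nat.not_le.mpr (h u k hc)]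

lemma F_stable_eq {c : (ℤ × ℤ) → Option ℕ} (h : Stable c) : F c = c := by
  funext v
  unfold F
  cases hc : c v with
  | none => rfl
  | some k =>
    have hk := h v k hc
    simp only [Nat.not_le.mpr hk, if_false]
    rw [List.countP_eq_zero.mpr (fun u _ => by simp [fired_false h u])]
    rfl

lemma live_F_subset (n m : ℕ) (c : (ℤ × ℤ) → Option ℕ) :
    live n m (F c) ⊆ live n m c := by
  intro v hv
  simp only [live, Finset.mem_filter] at *
  refine ⟨hv.1, ?_⟩
  have hv := hv.2
  by_contra hc
  rw [Option.not_isSome_iff_eq_none] at hc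
  rw [F_none hc] at hv
  simp at hv

lemma card_lt {n m : ℕ} {c : (ℤ × ℤ) → Option ℕ} (hout : Out n m c) (h : ¬ Stable c) :
    (live n m (F c)).card < (live n m c).card := by
  simp only [Stable, not_forall] at h
  obtain ⟨v, k, hvk, hk⟩ := h
  rw [Nat.not_lt] at hk
  have hvr : v ∈ rect n m := by
    by_contra hr
    rw [hout v hr] at hvk; cases hvk
  apply Finset.card_lt_card
  rw [Finset.ssubset_iff_of_subset (live_F_subset n m c)]
  refine ⟨v, ?_, ?_⟩
  · simp [live, hvr, hvk]
  · have hF : F c v = none := by unfold F; rw [hvk]; simp [hk]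
    simp [live, hF]

lemma live_card_le (n m : ℕ) (c : (ℤ × ℤ) → Option ℕ) :
    (live n m c).card ≤ n * m := by
  calc (live n m c).card ≤ (rect n m).card := Finset.card_le_card (Finset.filter_subset _ _)
    _ = n * m := by simp [rect]

theorem stabilizes (n m : ℕ) (c : (ℤ × ℤ) → Option ℕ)
    (hout : ∀ v : ℤ × ℤ, (v.1 < 0 ∨ (n : ℤ) ≤ v.1 ∨ v.2 < 0 ∨ (m : ℤ) ≤ v.2) → c v = none)
    (hin : ∀ v : ℤ × ℤ, (0 ≤ v.1 ∧ v.1 < (n : ℤ) ∧ 0 ≤ v.2 ∧ v.2 < (m : ℤ)) →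
      ∃ k, k ≤ 4 ∧ c v = some k) :
    (∀ (v : ℤ × ℤ) (k : ℕ), F^[n * m + 1] c v = some k → k < 4) ∧
    F^[n * m + 2] c = F^[n * m + 1] c := by
  have hOut0 : Out n m c := by
    intro v hv
    apply hout
    simp only [rect, Finset.mem_product, Finset.mem_Ico, not_and_or, not_le, not_lt] at hv
    tauto
  have hOut : ∀ t, Out n m (F^[t] c) := by
    intro t
    induction t with
    | zero => exact hOut0
    | succ t ih => rw [Function.iterate_succ_apply']; exact Out_F ih
  have key : ∀ t, Stable (F^[t] c) ∨ (live n m (F^[t] c)).card + t ≤ n * m := by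
    intro t
    induction t with
    | zero => exact Or.inr (by simpa using live_card_le n m c)
    | succ t ih =>
      by_cases hs : Stable (F^[t] c)
      · left
        rw [Function.iterate_succ_apply', F_stable_eq hs]
        exact hs
      · right
        rcases ih with h | h
        · exact absurd h hs
        · have := card_lt (hOut t) hs
          rw [Function.iterate_succ_apply']
          omega
  have hstab : Stable (F^[n * m + 1] c) := by
    rcases key (n * m + 1) with h | h
    · exact h
    · omega
  exact ⟨hstab, by rw [show n * m + 2 = n * m + 1 + 1 from rfl,
      Function.iterate_succ_apply', F_stable_eq hstab]⟩
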